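/- arXiv:1710.05132 — 2 statements merged into one kernel-verified Lean document; each statement's English description precedes it below -/
import Mathlib

section
/- Let l ∈ ℤ with l ≠ 0 and let f ∈ Y_l. Setting φ = A_l^{−1}f, one has ‖φ‖ ≤ (1/2)‖f‖ if |l| = 1 and ‖φ‖ ≤ l^{−2}‖f‖ if |l| ≥ 2, and consequently Re⟨f, f + φ⟩_{L²(𝕋)} ≥ (1/2)‖f‖². -/
/-!
STATEMENT 6: For `l ∈ ℤ \ {0}` and `f ∈ Y_l`, setting `φ = A_l⁻¹ f` one has
`‖φ‖ ≤ (1/2)‖f‖` if `|l| = 1`, `‖φ‖ ≤ l⁻²‖f‖` if `|l| ≥ 2`, and consequently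
`Re⟨f, f + φ⟩ ≥ (1/2)‖f‖²`.

We work on `𝕋 = ℝ/(2πℤ)` with the (normalized) Haar measure; `A_l⁻¹` is
characterized through Fourier coefficients: `φ = A_l⁻¹ u` is the unique
`φ ∈ H²(𝕋)` with `φ'' - l²φ = u`, i.e. `(n² + l²) φ̂(n) = -û(n)` for all `n`.
-/

open MeasureTheory Complex Real AddCircle

noncomputable section

instance fact2pi : Fact (0 < 2 * Real.pi) := ⟨by positivity⟩

/-- `L²(𝕋)` with respect to the normalized Haar measure on `𝕋 = ℝ/(2πℤ)`. -/
abbrev HT : Type := Lp ℂ 2 (@AddCircle.haarAddCircle (2 * Real.pi) fact2pi)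

/-- The `n`-th Fourier coefficient of `u ∈ L²(𝕋)`. -/
def coefT (u : HT) (n : ℤ) : ℂ := fourierCoeff (↑u) n


lemma normsq_eq_tsum (u : HT) : ‖u‖ ^ 2 = ∑' n : ℤ, ‖coefT u n‖ ^ 2 := by
  have H₂ : ‖fourierBasis.repr u‖ ^ 2 = ‖u‖ ^ 2 := by simp
  have H₁ : ‖fourierBasis.repr u‖ ^ 2 = ∑' i, ‖fourierBasis.repr u i‖ ^ 2 := by
    apply_mod_cast lp.norm_rpow_eq_tsum ?_ (fourierBasis.repr u)
    norm_num
  rw [← H₂, H₁]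
  congr 1; ext n; rw [fourierBasis_repr]; rfl

lemma summable_coef (u : HT) : Summable (fun n : ℤ => ‖coefT u n‖ ^ 2) := by
  have := lp.memℓp (fourierBasis.repr u)
  have h := this.summable (by norm_num : (0:ℝ) < (2 : ENNReal).toReal)
  have : (fun n : ℤ => ‖coefT u n‖ ^ 2) = fun n : ℤ => ‖fourierBasis.repr u n‖ ^ (2 : ENNReal).toReal := by
    ext n; rw [fourierBasis_repr]; norm_num; rfl
  rw [this]; exact h

lemma norm_le_of_coef (c : ℝ) (hc : 0 ≤ c) (u v : HT)
    (h : ∀ n : ℤ, ‖coefT u n‖ ≤ c * ‖coefT v n‖) : ‖u‖ ≤ c * ‖v‖ := by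
  have hsq : ‖u‖ ^ 2 ≤ (c * ‖v‖) ^ 2 := by
    rw [normsq_eq_tsum u, mul_pow, normsq_eq_tsum v, ← tsum_mul_left]
    refine Summable.tsum_le_tsum (fun n => ?_) (summable_coef u) ((summable_coef v).mul_left _)
    rw [← mul_pow]
    exact pow_le_pow_left₀ (norm_nonneg _) (h n) 2
  nlinarith [norm_nonneg u, mul_nonneg hc (norm_nonneg v)]

theorem stmt6
    (invA : ℤ → HT → HT)
    -- `invA l` is the inverse of `A_l = d²/dy² - l²`, characterized through Fourier
    -- coefficients: `φ = invA l u` is the unique `φ ∈ H²` with `φ'' - l² φ = u`.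
    (hinvA : ∀ (l : ℤ), l ≠ 0 → ∀ (u : HT) (n : ℤ),
      ((n : ℂ)^2 + (l : ℂ)^2) * coefT (invA l u) n = - coefT u n)
    (l : ℤ) (hl : l ≠ 0)
    (f : HT)
    -- `f ∈ Y_l` : if `|l| = 1` then `f` has mean zero
    (hf : |l| = 1 → coefT f 0 = 0) :
    (|l| = 1 → ‖invA l f‖ ≤ (1/2) * ‖f‖) ∧
    (2 ≤ |l| → ‖invA l f‖ ≤ ((l : ℝ)^2)⁻¹ * ‖f‖) ∧
    (1/2) * ‖f‖^2 ≤ (inner ℂ f (f + invA l f) : ℂ).re := by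
  set φ := invA l f with hφdef
  have hlR : (0:ℝ) < (l:ℝ)^2 := by
    have : (l:ℝ) ≠ 0 := Int.cast_ne_zero.mpr hl
    positivity
  have hnorm : ∀ n : ℤ, ‖coefT φ n‖ = ‖coefT f n‖ / ((n:ℝ)^2 + (l:ℝ)^2) := by
    intro n
    have hdpos : (0:ℝ) < (n:ℝ)^2 + (l:ℝ)^2 := by positivity
    have hcast : ((n:ℂ)^2 + (l:ℂ)^2) = ((( (n:ℝ)^2 + (l:ℝ)^2 ) : ℝ) : ℂ) := by push_cast; ring
    have hdne : ((n:ℂ)^2 + (l:ℂ)^2) ≠ 0 := by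
      rw [hcast]
      exact_mod_cast hdpos.ne'
    have heq : coefT φ n = - coefT f n / ((n:ℂ)^2 + (l:ℂ)^2) := by
      field_simp
      linear_combination hinvA l hl f n
    rw [heq, norm_div, norm_neg, hcast, Complex.norm_real, Real.norm_of_nonneg hdpos.le]
  -- bound for |l| = 1
  have hb1 : |l| = 1 → ‖φ‖ ≤ (1/2) * ‖f‖ := by
    intro h1
    have hl2 : (l:ℝ)^2 = 1 := by
      have : l^2 = 1 := by rw [← _root_.sq_abs l, h1]; norm_num
      exact_mod_cast congrArg (Int.cast : ℤ → ℝ) this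
    refine norm_le_of_coef (1/2) (by norm_num) φ f (fun n => ?_)
    rcases eq_or_ne n 0 with rfl | hn
    · simp [hnorm 0, hf h1]
    · have hn1 : (1:ℝ) ≤ (n:ℝ)^2 := by
        have : 1 ≤ n^2 := by
          rcases lt_or_gt_of_ne hn with h | h <;> nlinarith
        exact_mod_cast this
      rw [hnorm n, hl2]
      rw [div_le_iff₀ (by positivity)]
      nlinarith [norm_nonneg (coefT f n)]
  -- bound for general l ≠ 0
  have hb2 : ‖φ‖ ≤ ((l:ℝ)^2)⁻¹ * ‖f‖ := by
    refine norm_le_of_coef ((l:ℝ)^2)⁻¹ (by positivity) φ f (fun n => ?_)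
    rw [hnorm n, div_le_iff₀ (by positivity)]
    have h1 : (1:ℝ) ≤ ((l:ℝ)^2)⁻¹ * ((n:ℝ)^2 + (l:ℝ)^2) := by
      rw [inv_mul_eq_div, le_div_iff₀ hlR]
      nlinarith [sq_nonneg (n:ℝ)]
    nlinarith [norm_nonneg (coefT f n)]
  -- combined half bound
  have hhalf : ‖φ‖ ≤ (1/2) * ‖f‖ := by
    have habs : 0 < |l| := abs_pos.mpr hl
    rcases (by omega : |l| = 1 ∨ 2 ≤ |l|) with h | h
    · exact hb1 h
    · have h4 : (4:ℝ) ≤ (l:ℝ)^2 := by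
        have : 4 ≤ l^2 := by nlinarith [_root_.sq_abs l]
        exact_mod_cast this
      have : ((l:ℝ)^2)⁻¹ ≤ 1/2 := by
        rw [inv_le_comm₀ (by positivity) (by norm_num)]
        linarith
      calc ‖φ‖ ≤ ((l:ℝ)^2)⁻¹ * ‖f‖ := hb2
        _ ≤ (1/2) * ‖f‖ := by
            have := norm_nonneg f; nlinarith
  refine ⟨hb1, fun _ => hb2, ?_⟩
  have h1 : (inner ℂ f (f + φ) : ℂ).re = ‖f‖^2 + (inner ℂ f φ : ℂ).re := by
    rw [inner_add_right, Complex.add_re]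
    congr 1
    rw [inner_self_eq_norm_sq_to_K]; norm_cast
  have h2 : |(inner ℂ f φ : ℂ).re| ≤ ‖f‖ * ‖φ‖ :=
    (Complex.abs_re_le_norm _).trans (by
      exact norm_inner_le_norm f φ)
  rw [h1]
  have hf0 := norm_nonneg f
  have := abs_le.mp h2
  nlinarith
end
end

section
/- There exists C > 0 such that for every l ∈ ℤ \ {0}, every μ ∈ ℝ with |μ| > 1, and every u ∈ H¹(𝕋): (|μ| − 1)²‖u + A_l^{−1}u‖² + (|μ| − 1)‖cos y · (u + A_l^{−1}u)‖² + |μ|(|μ| − 1)‖(−A_l)^{−1/2}u‖² ≤ C ‖μu − Λ̂_l u‖². -/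
/-!
STATEMENT 10: There exists `C > 0` such that for every `l ∈ ℤ \ {0}`, every `μ ∈ ℝ`
with `|μ| > 1`, and every `u ∈ H¹(𝕋)`:
`(|μ|-1)²‖u + A_l⁻¹u‖² + (|μ|-1)‖cos y·(u + A_l⁻¹u)‖² + |μ|(|μ|-1)‖(-A_l)^{-1/2}u‖²
   ≤ C ‖μu - Λ̂_l u‖²`.
-/

open MeasureTheory Complex Real AddCircle

noncomputable section

/-- `sin` as a function on the circle `𝕋 = ℝ/(2πℤ)`. -/
def sinT (y : AddCircle (2 * Real.pi)) : ℝ := Real.sin_periodic.lift y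

/-- `cos` as a function on the circle `𝕋 = ℝ/(2πℤ)`. -/
def cosT (y : AddCircle (2 * Real.pi)) : ℝ := Real.cos_periodic.lift y

/-- The `L²(𝕋)`-norm of a raw function. -/
def nrmT (v : AddCircle (2 * Real.pi) → ℂ) : ℝ :=
  (eLpNorm v 2 (@AddCircle.haarAddCircle (2 * Real.pi) fact2pi)).toReal

/-- `u ∈ H¹(𝕋)`. -/
def memH1 (u : HT) : Prop := Summable fun n : ℤ => (n : ℝ)^2 * ‖coefT u n‖^2

/-- `‖(-A_l)^{1/2}u‖² = ‖u'‖² + l²‖u‖²` (by Parseval, `= ∑ (n²+l²)|û(n)|²`). -/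
def sqH1 (l : ℤ) (u : HT) : ℝ := ∑' n : ℤ, ((n : ℝ)^2 + (l : ℝ)^2) * ‖coefT u n‖^2

/-- `‖(-A_l)^{-1/2}u‖² = ‖(A_l⁻¹u)'‖² + l²‖A_l⁻¹u‖²` (by Parseval, `= ∑ (n²+l²)⁻¹|û(n)|²`). -/
def sqHm1 (l : ℤ) (u : HT) : ℝ := ∑' n : ℤ, ((n : ℝ)^2 + (l : ℝ)^2)⁻¹ * ‖coefT u n‖^2

open scoped ComplexConjugate ENNReal

local notation "μ₀" => (@AddCircle.haarAddCircle (2 * Real.pi) fact2pi)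

lemma fourier_coe_2pi (n : ℤ) (x : ℝ) :
    fourier n (x : AddCircle (2 * Real.pi)) = Complex.exp (n * x * Complex.I) := by
  rw [fourier_coe_apply]
  congr 1
  have h : (Real.pi : ℂ) ≠ 0 := by
    simpa using Real.pi_ne_zero
  push_cast
  field_simp

lemma sinT_eqC (y : AddCircle (2 * Real.pi)) :
    (sinT y : ℂ) = (fourier 1 y - fourier (-1) y) / (2 * Complex.I) := by
  induction y using QuotientAddGroup.induction_on with
  | H x =>
    rw [fourier_coe_2pi, fourier_coe_2pi]
    rw [show sinT (x : AddCircle (2 * Real.pi)) = Real.sin x from Real.sin_periodic.lift_coe x]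
    rw [Complex.ofReal_sin, Complex.sin]
    push_cast
    have hI : Complex.I ≠ 0 := Complex.I_ne_zero
    have h2 : Complex.exp (-1 * ↑x * Complex.I) = Complex.exp (-(↑x * Complex.I)) := by ring_nf
    have h1 : Complex.exp (1 * ↑x * Complex.I) = Complex.exp (↑x * Complex.I) := by ring_nf
    rw [h1, h2]
    field_simp
    ring_nf
    rw [Complex.I_sq]
    ring

lemma cosT_eqC (y : AddCircle (2 * Real.pi)) :
    (cosT y : ℂ) = (fourier 1 y + fourier (-1) y) / 2 := by
  induction y using QuotientAddGroup.induction_on with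
  | H x =>
    rw [fourier_coe_2pi, fourier_coe_2pi]
    rw [show cosT (x : AddCircle (2 * Real.pi)) = Real.cos x from Real.cos_periodic.lift_coe x]
    rw [Complex.ofReal_cos, Complex.cos]
    push_cast
    have h2 : Complex.exp (-1 * ↑x * Complex.I) = Complex.exp (-(↑x * Complex.I)) := by ring_nf
    have h1 : Complex.exp (1 * ↑x * Complex.I) = Complex.exp (↑x * Complex.I) := by ring_nf
    rw [h1, h2]
    ring

lemma norm_fourier_apply (n : ℤ) (y : AddCircle (2 * Real.pi)) : ‖fourier n y‖ = 1 :=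
  Circle.norm_coe _

lemma conj_mul_self (z : ℂ) : (starRingEnd ℂ) z * z = ((‖z‖ ^ 2 : ℝ) : ℂ) := by
  rw [mul_comm, Complex.mul_conj, Complex.normSq_eq_norm_sq]

lemma continuous_sinTC : Continuous (fun y : AddCircle (2 * Real.pi) => (sinT y : ℂ)) := by
  have h : (fun y : AddCircle (2 * Real.pi) => (sinT y : ℂ))
      = fun y => (fourier 1 y - fourier (-1) y) / (2 * Complex.I) := funext sinT_eqC
  rw [h]
  exact ((fourier 1).continuous.sub (fourier (-1)).continuous).div_const _

lemma continuous_cosTC : Continuous (fun y : AddCircle (2 * Real.pi) => (cosT y : ℂ)) := by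
  have h : (fun y : AddCircle (2 * Real.pi) => (cosT y : ℂ))
      = fun y => (fourier 1 y + fourier (-1) y) / 2 := funext cosT_eqC
  rw [h]
  exact ((fourier 1).continuous.add (fourier (-1)).continuous).div_const _

lemma continuous_cosT : Continuous cosT := by
  have h : cosT = fun y => (Complex.re ((cosT y : ℂ))) := by
    funext y; rw [Complex.ofReal_re]
  rw [h]; exact Complex.continuous_re.comp continuous_cosTC

lemma continuous_sinT : Continuous sinT := by
  have h : sinT = fun y => (Complex.re ((sinT y : ℂ))) := by
    funext y; rw [Complex.ofReal_re]
  rw [h]; exact Complex.continuous_re.comp continuous_sinTC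

lemma abs_sinT_le (y : AddCircle (2 * Real.pi)) : |sinT y| ≤ 1 := by
  induction y using QuotientAddGroup.induction_on with
  | H x =>
    rw [show sinT (x : AddCircle (2 * Real.pi)) = Real.sin x from Real.sin_periodic.lift_coe x]
    exact Real.abs_sin_le_one x

lemma abs_cosT_le (y : AddCircle (2 * Real.pi)) : |cosT y| ≤ 1 := by
  induction y using QuotientAddGroup.induction_on with
  | H x =>
    rw [show cosT (x : AddCircle (2 * Real.pi)) = Real.cos x from Real.cos_periodic.lift_coe x]
    exact Real.abs_cos_le_one x

lemma sin_cos_sq (y : AddCircle (2 * Real.pi)) : sinT y ^ 2 + cosT y ^ 2 = 1 := by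
  induction y using QuotientAddGroup.induction_on with
  | H x =>
    rw [show sinT (x : AddCircle (2 * Real.pi)) = Real.sin x from Real.sin_periodic.lift_coe x,
      show cosT (x : AddCircle (2 * Real.pi)) = Real.cos x from Real.cos_periodic.lift_coe x]
    exact Real.sin_sq_add_cos_sq x

lemma integrable_coe (v : HT) : Integrable (↑v) μ₀ := (Lp.memLp v).integrable one_le_two

lemma integrable_normsq (v : HT) : Integrable (fun t => ‖v t‖ ^ 2) μ₀ := by
  have h := (Lp.memLp v).integrable_norm_rpow two_ne_zero (by norm_num)
  have h2 : (2 : ℝ≥0∞).toReal = (2 : ℝ) := by norm_num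
  rw [h2] at h
  simpa [Real.rpow_natCast] using h

lemma integrable_fourier_mul (v : HT) (k : ℤ) :
    Integrable (fun t => fourier k t * v t) μ₀ :=
  (integrable_coe v).bdd_mul (fourier k).continuous.aestronglyMeasurable
    (Filter.Eventually.of_forall fun y => le_of_eq (norm_fourier_apply k y))

lemma fourierCoeff_congr_ae' {f g : AddCircle (2 * Real.pi) → ℂ} (h : f =ᵐ[μ₀] g) (n : ℤ) :
    fourierCoeff f n = fourierCoeff g n :=
  integral_congr_ae (by filter_upwards [h] with t ht; rw [ht])

lemma coefT_eq_intg (v : HT) (n : ℤ) : coefT v n = ∫ t, fourier (-n) t * v t ∂μ₀ := by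
  unfold coefT fourierCoeff
  simp [smul_eq_mul]

lemma coefT_add (x y : HT) (n : ℤ) : coefT (x + y) n = coefT x n + coefT y n := by
  rw [coefT, fourierCoeff_congr_ae' (Lp.coeFn_add x y) n]
  unfold fourierCoeff
  simp only [Pi.add_apply, smul_eq_mul, mul_add]
  rw [integral_add (integrable_fourier_mul x (-n)) (integrable_fourier_mul y (-n)),
    coefT_eq_intg, coefT_eq_intg]

lemma coefT_smul (c : ℂ) (x : HT) (n : ℤ) : coefT (c • x) n = c * coefT x n := by
  rw [coefT, fourierCoeff_congr_ae' (Lp.coeFn_smul c x) n]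
  unfold fourierCoeff
  simp only [Pi.smul_apply, smul_eq_mul]
  rw [coefT_eq_intg]
  rw [show (fun t => fourier (-n) t * (c * x t)) = fun t => c * (fourier (-n) t * x t) by
    funext t; ring]
  rw [integral_const_mul]

lemma coefT_sub (x y : HT) (n : ℤ) : coefT (x - y) n = coefT x n - coefT y n := by
  have h : x - y + y = x := by abel
  have h2 := coefT_add (x - y) y n
  rw [h] at h2
  rw [h2]; ring

local notation "B" => @fourierBasis (2 * Real.pi) fact2pi

lemma inner_basis (v : HT) (i : ℤ) : @inner ℂ _ _ ((B) i) v = coefT v i := by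
  rw [← HilbertBasis.repr_apply_apply, fourierBasis_repr]; rfl

lemma inner_tsum (x y : HT) :
    (@inner ℂ _ _ x y) = ∑' n : ℤ, conj (coefT x n) * coefT y n := by
  rw [← HilbertBasis.tsum_inner_mul_inner B x y]
  congr 1; funext n
  rw [inner_basis, ← inner_conj_symm, inner_basis]

lemma summable_coef_sq (v : HT) : Summable (fun n : ℤ => ‖coefT v n‖ ^ 2) := by
  have h := HilbertBasis.summable_inner_mul_inner B v v
  have he : (fun i : ℤ => (@inner ℂ _ _ v ((B) i)) * @inner ℂ _ _ ((B) i) v)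
      = fun n : ℤ => ((‖coefT v n‖ ^ 2 : ℝ) : ℂ) := by
    funext n
    rw [inner_basis, ← inner_conj_symm, inner_basis, RCLike.conj_mul]
    norm_cast
  rw [he] at h
  exact Complex.summable_ofReal.mp h

lemma norm_sq_tsum (v : HT) : ‖v‖ ^ 2 = ∑' n : ℤ, ‖coefT v n‖ ^ 2 := by
  have h : ((‖v‖ ^ 2 : ℝ) : ℂ) = @inner ℂ _ _ v v := by
    rw [inner_self_eq_norm_sq_to_K]; norm_cast
  rw [inner_tsum] at h
  have he : (fun n : ℤ => conj (coefT v n) * coefT v n)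
      = fun n : ℤ => ((‖coefT v n‖ ^ 2 : ℝ) : ℂ) := by
    funext n; rw [RCLike.conj_mul]; norm_cast
  rw [he, ← Complex.ofReal_tsum] at h
  exact_mod_cast h

lemma norm_sq_integral (v : HT) : ‖v‖ ^ 2 = ∫ t, ‖v t‖ ^ 2 ∂μ₀ := by
  rw [norm_sq_tsum]
  exact tsum_sq_fourierCoeff v


lemma memLp_mul (v : HT) (g : AddCircle (2 * Real.pi) → ℂ) (hg : Continuous g)
    (hb : ∀ y, ‖g y‖ ≤ 1) : MemLp (fun y => g y * v y) 2 μ₀ := by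
  apply MemLp.of_le (Lp.memLp v) (hg.aestronglyMeasurable.mul (Lp.aestronglyMeasurable v))
  filter_upwards with y
  calc ‖g y * v y‖ = ‖g y‖ * ‖v y‖ := norm_mul _ _
    _ ≤ 1 * ‖v y‖ := by
        have := hb y
        have h2 : (0:ℝ) ≤ ‖v y‖ := norm_nonneg _
        nlinarith
    _ = ‖v y‖ := one_mul _


lemma int_one_le_sq {n : ℤ} (hn : n ≠ 0) : (1:ℝ) ≤ (n:ℝ) ^ 2 := by
  have h : (1:ℤ) ≤ n ^ 2 := by
    rcases lt_or_gt_of_ne hn with h | h <;> nlinarith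
  exact_mod_cast h

lemma int_four_le_sq {l : ℤ} (h0 : l ≠ 0) (h1 : l ≠ 1) (h2 : l ≠ -1) : (4:ℝ) ≤ (l:ℝ) ^ 2 := by
  have h : (4:ℤ) ≤ l ^ 2 := by
    rcases lt_trichotomy l 0 with h | h | h
    · have hle : l ≤ -2 := by omega
      nlinarith
    · exact absurd h h0
    · have hge : 2 ≤ l := by omega
      nlinarith
  exact_mod_cast h

lemma sr_term {sn rn x : ℝ} (hs : 0 < sn) (h12 : sn ≤ 1/2) (hr : 1/2 ≤ rn) (hx : 0 ≤ x) :
    sn ^ 2 * x ≤ sn * rn * x := by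
  nlinarith [mul_nonneg (mul_nonneg hs.le hx) (show (0:ℝ) ≤ rn - sn by linarith)]

lemma cosT_sq_le_one (y : AddCircle (2 * Real.pi)) : (cosT y) ^ 2 ≤ 1 := by
  nlinarith [abs_cosT_le y, _root_.sq_abs (cosT y), abs_nonneg (cosT y)]

lemma ptwise_cos {σ st ct x : ℝ} (hσ : σ ^ 2 = 1) (hsc : st ^ 2 + ct ^ 2 = 1) (hx : 0 ≤ x) :
    ct ^ 2 * x ≤ 2 * x - 2 * σ * (st * x) := by
  have h1 : 0 ≤ 2 - 2 * σ * st - ct ^ 2 := by nlinarith [sq_nonneg (st - σ)]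
  nlinarith [mul_nonneg h1 hx]

lemma ptwise_abs {st x : ℝ} (h : |st| ≤ 1) (hx : 0 ≤ x) : |st| * x ≤ x := by nlinarith

section ArithLemmas

lemma arith1 {m NF Nv E P : ℝ} (hm : 1 < m) (hNv : 0 ≤ Nv) (hNF : 0 ≤ NF)
    (hP : 0 ≤ P) (hge : (m - 1) * Nv ^ 2 + m * P ≤ E) (hle : E ≤ NF * Nv) :
    (m - 1) ^ 2 * Nv ^ 2 ≤ NF ^ 2 ∧ (m - 1) * E ≤ NF ^ 2 ∧ m * (m - 1) * P ≤ NF ^ 2 := by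
  have hm0 : 0 < m := by linarith
  have hm1 : 0 < m - 1 := by linarith
  have hEv : (m - 1) * Nv ^ 2 ≤ NF * Nv := by nlinarith
  have k1 : (m - 1) ^ 2 * Nv ^ 2 ≤ NF ^ 2 := by
    nlinarith [sq_nonneg (NF - (m - 1) * Nv)]
  have k2 : (m - 1) * E ≤ NF ^ 2 := by
    nlinarith [sq_nonneg (NF - (m - 1) * Nv)]
  refine ⟨k1, k2, ?_⟩
  nlinarith [mul_le_mul_of_nonneg_left hge hm1.le]

lemma arith2 {m σ Ts Nv NC NF E P : ℝ} (hm : 1 < m) (hP : 0 ≤ P)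
    (hEeq : E = m * (Nv ^ 2 + P) - σ * Ts)
    (hintle : NC ^ 2 ≤ 2 * Nv ^ 2 - 2 * (σ * Ts))
    (hEF2 : (m - 1) * E ≤ NF ^ 2) :
    (m - 1) * NC ^ 2 ≤ 2 * NF ^ 2 := by
  have hm1 : 0 < m - 1 := by linarith
  have h2 : NC ^ 2 ≤ 2 * E := by nlinarith [sq_nonneg Nv]
  nlinarith [mul_le_mul_of_nonneg_left h2 hm1.le]

lemma arith3 {m A0 NF P : ℝ} (hm : 1 < m) (hNF : 0 ≤ NF) (hA0 : 0 ≤ A0)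
    (hsq : m ^ 2 * A0 ≤ 2 * NF ^ 2 + P) (k3 : m * (m - 1) * P ≤ NF ^ 2) :
    m * (m - 1) * A0 ≤ 3 * NF ^ 2 := by
  have hm0 : 0 < m := by linarith
  have hm1 : 0 < m - 1 := by linarith
  have h2 := mul_le_mul_of_nonneg_left hsq (mul_pos hm0 hm1).le
  nlinarith [mul_pos hm0 hm0, mul_nonneg hm0.le (mul_nonneg hm0.le (sq_nonneg NF)),
    mul_nonneg hm0.le (sq_nonneg NF), sq_nonneg NF]

lemma arith4 {m a0 F0 D NF P : ℝ} (hm : 1 < m) (ha0 : 0 ≤ a0) (hF0 : 0 ≤ F0)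
    (hD : 0 ≤ D) (htri : m * a0 ≤ F0 + D) (hF0le : F0 ^ 2 ≤ NF ^ 2)
    (hDle : D ^ 2 ≤ P / 2) : m ^ 2 * a0 ^ 2 ≤ 2 * NF ^ 2 + P := by
  have hm0 : 0 < m := by linarith
  have h1 : (m * a0) ^ 2 ≤ (F0 + D) ^ 2 := by
    nlinarith [mul_nonneg hm0.le ha0]
  nlinarith [sq_nonneg (F0 - D)]

lemma arith5 {x y a b P : ℝ} (hx : x ^ 2 = (1/4) * a) (hy : y ^ 2 = (1/4) * b)
    (hple : (1/4) * a + (1/4) * b ≤ P) : ((x + y) / 2) ^ 2 ≤ P / 2 := by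
  nlinarith [sq_nonneg (x - y)]

lemma arith6 {m NF S2 P A0 : ℝ} (hm : 1 < m)
    (hsum : S2 ≤ 2 * P + A0) (k3 : m * (m - 1) * P ≤ NF ^ 2)
    (hb : m * (m - 1) * A0 ≤ 3 * NF ^ 2) :
    m * (m - 1) * S2 ≤ 5 * NF ^ 2 := by
  have hm0 : 0 < m := by linarith
  have hm1 : 0 < m - 1 := by linarith
  have h1 := mul_le_mul_of_nonneg_left hsum (mul_pos hm0 hm1).le
  nlinarith

lemma arith7 {m NF S2 P : ℝ} (hm : 1 < m)
    (hsum : S2 ≤ 2 * P) (k3 : m * (m - 1) * P ≤ NF ^ 2) :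
    m * (m - 1) * S2 ≤ 2 * NF ^ 2 := by
  have hm0 : 0 < m := by linarith
  have hm1 : 0 < m - 1 := by linarith
  have h1 := mul_le_mul_of_nonneg_left hsum (mul_pos hm0 hm1).le
  nlinarith

end ArithLemmas

set_option maxHeartbeats 1000000 in
theorem stmt10
    (invA : ℤ → HT → HT)
    (hinvA : ∀ (l : ℤ), l ≠ 0 → ∀ (u : HT) (n : ℤ),
      ((n : ℂ)^2 + (l : ℂ)^2) * coefT (invA l u) n = - coefT u n) :
    ∃ C > (0:ℝ),
      ∀ l : ℤ, l ≠ 0 → ∀ μ : ℝ, 1 < |μ| → ∀ u : HT, memH1 u →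
        (|μ| - 1)^2 * nrmT (fun y => u y + invA l u y)^2
          + (|μ| - 1) * nrmT (fun y => (cosT y : ℂ) * (u y + invA l u y))^2
          + |μ| * (|μ| - 1) * sqHm1 l u
        ≤ C * nrmT (fun y => (μ : ℂ) * u y - (sinT y : ℂ) * (u y + invA l u y))^2 := by
  refine ⟨10, by norm_num, ?_⟩
  intro l hl μ hμ u _hu
  have hm1 : (0:ℝ) < |μ| - 1 := by linarith
  have hm0 : (0:ℝ) < |μ| := by linarith
  obtain ⟨σ, hσsq, hσμ⟩ : ∃ σ : ℝ, σ ^ 2 = 1 ∧ σ * μ = |μ| := by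
    rcases le_or_gt 0 μ with h | h
    · exact ⟨1, by norm_num, by rw [_root_.abs_of_nonneg h]; ring⟩
    · exact ⟨-1, by norm_num, by rw [_root_.abs_of_neg h]; ring⟩
  have hσabs : |σ| = 1 := by
    have h := _root_.sq_abs σ
    nlinarith [abs_nonneg σ]
  -- basic facts about weights
  have hq1 : ∀ n : ℤ, (1:ℝ) ≤ (n:ℝ)^2 + (l:ℝ)^2 := by
    intro n
    have h1' : (1:ℝ) ≤ (l:ℝ)^2 := int_one_le_sq hl
    nlinarith [sq_nonneg ((n:ℝ))]
  have hq0 : ∀ n : ℤ, (0:ℝ) < (n:ℝ)^2 + (l:ℝ)^2 := fun n => lt_of_lt_of_le one_pos (hq1 n)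
  set s : ℤ → ℝ := fun n => ((n:ℝ)^2 + (l:ℝ)^2)⁻¹ with hs_def
  set r : ℤ → ℝ := fun n => 1 - s n with hr_def
  have hs_pos : ∀ n, 0 < s n := fun n => inv_pos.mpr (hq0 n)
  have hs_le1 : ∀ n, s n ≤ 1 := fun n => inv_le_one_of_one_le₀ (hq1 n)
  have hr_nonneg : ∀ n, 0 ≤ r n := fun n => by
    have := hs_le1 n; simp only [hr_def]; linarith
  have hr_le1 : ∀ n, r n ≤ 1 := fun n => by
    have := hs_pos n; simp only [hr_def]; linarith
  have hrs : ∀ n, r n + s n = 1 := fun n => by simp only [hr_def]; ring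
  set a : ℤ → ℂ := coefT u with ha_def
  set v : HT := u + invA l u with hv_def
  -- Fourier coefficients of v
  have hvc : ∀ n, coefT v n = (r n : ℂ) * a n := by
    intro n
    have h := hinvA l hl u n
    have hqC : ((n:ℂ)^2 + (l:ℂ)^2) = ((((n:ℝ)^2 + (l:ℝ)^2) : ℝ) : ℂ) := by push_cast; ring
    have hqne : (((((n:ℝ)^2 + (l:ℝ)^2)) : ℝ) : ℂ) ≠ 0 := by
      simp only [ne_eq, Complex.ofReal_eq_zero]
      exact (hq0 n).ne'
    rw [hqC] at h
    have hc : coefT (invA l u) n = - a n / (((((n:ℝ)^2 + (l:ℝ)^2)) : ℝ) : ℂ) := by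
      rw [eq_div_iff hqne]
      linear_combination h
    rw [hv_def, coefT_add, hc]
    have hrc : ((r n : ℝ) : ℂ) = 1 - ((((((n:ℝ)^2 + (l:ℝ)^2)) : ℝ) : ℂ))⁻¹ := by
      simp only [hr_def, hs_def]
      push_cast
      ring
    rw [hrc]
    have han : coefT u n = a n := rfl
    rw [han]
    have hqne2 : (((((n:ℝ)^2 + (l:ℝ)^2)) : ℝ) : ℂ) ≠ 0 := hqne
    field_simp
    ring
  have hvcn : ∀ n, ‖coefT v n‖ ^ 2 = r n ^ 2 * ‖a n‖ ^ 2 := by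
    intro n
    rw [hvc, norm_mul, Complex.norm_real, Real.norm_eq_abs, _root_.abs_of_nonneg (hr_nonneg n), mul_pow]
  -- summability
  have hsumA : Summable (fun n : ℤ => ‖a n‖ ^ 2) := summable_coef_sq u
  have hsumP : Summable (fun n : ℤ => s n * r n * ‖a n‖ ^ 2) := by
    refine Summable.of_nonneg_of_le (fun n => ?_) (fun n => ?_) hsumA
    · have := hs_pos n
      have := hr_nonneg n
      positivity
    · have h1 := hs_le1 n
      have h2 := hr_le1 n
      have h3 := hs_pos n
      have h4 := hr_nonneg n
      nlinarith [sq_nonneg ‖a n‖, mul_nonneg h3.le h4, mul_nonneg (mul_nonneg h3.le h4) (sq_nonneg ‖a n‖),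
        mul_le_one₀ h1 h4 h2]
  have hsumR : Summable (fun n : ℤ => s n ^ 2 * ‖a n‖ ^ 2) := by
    refine Summable.of_nonneg_of_le (fun n => ?_) (fun n => ?_) hsumA
    · positivity
    · have h1 := hs_le1 n
      have h3 := hs_pos n
      nlinarith [sq_nonneg ‖a n‖, mul_le_one₀ h1 h3.le h1, sq_nonneg (s n)]
  have hsumV : Summable (fun n : ℤ => r n ^ 2 * ‖a n‖ ^ 2) := by
    refine Summable.of_nonneg_of_le (fun n => ?_) (fun n => ?_) hsumA
    · positivity
    · have h1 := hr_le1 n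
      have h4 := hr_nonneg n
      nlinarith [sq_nonneg ‖a n‖, mul_le_one₀ h1 h4 h1]
  have hsumW : Summable (fun n : ℤ => r n * ‖a n‖ ^ 2) := by
    refine Summable.of_nonneg_of_le (fun n => ?_) (fun n => ?_) hsumA
    · have := hr_nonneg n
      positivity
    · have h1 := hr_le1 n
      have h4 := hr_nonneg n
      nlinarith [sq_nonneg ‖a n‖, mul_nonneg h4 (sq_nonneg ‖a n‖)]
  set P : ℝ := ∑' n : ℤ, s n * r n * ‖a n‖ ^ 2 with hP_def
  have hP_nonneg : 0 ≤ P := tsum_nonneg fun n => by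
    have := hs_pos n
    have := hr_nonneg n
    positivity
  have hNv2 : ‖v‖ ^ 2 = ∑' n : ℤ, r n ^ 2 * ‖a n‖ ^ 2 := by
    rw [norm_sq_tsum]
    exact tsum_congr fun n => hvcn n
  have hW : ∑' n : ℤ, r n * ‖a n‖ ^ 2 = ‖v‖ ^ 2 + P := by
    rw [hNv2, hP_def, ← Summable.tsum_add hsumV hsumP]
    apply tsum_congr
    intro n
    have h := hrs n
    linear_combination (-(r n * ‖a n‖ ^ 2)) * h
  -- inner products
  have hinner_uv : (inner ℂ u v : ℂ) = ((∑' n : ℤ, r n * ‖a n‖ ^ 2 : ℝ) : ℂ) := by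
    rw [inner_tsum, Complex.ofReal_tsum]
    apply tsum_congr
    intro n
    rw [hvc, Complex.ofReal_mul, show (starRingEnd ℂ) (coefT u n) * ((r n : ℂ) * a n)
        = (r n : ℂ) * ((starRingEnd ℂ) (a n) * a n) by rw [ha_def]; ring, conj_mul_self]
  -- the multiplier functions
  have hsinb : ∀ y, ‖((sinT y : ℂ))‖ ≤ 1 := fun y => by
    rw [Complex.norm_real, Real.norm_eq_abs]; exact abs_sinT_le y
  have hcosb : ∀ y, ‖((cosT y : ℂ))‖ ≤ 1 := fun y => by
    rw [Complex.norm_real, Real.norm_eq_abs]; exact abs_cosT_le y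
  have hSmem : MemLp (fun y => (sinT y : ℂ) * v y) 2 μ₀ :=
    memLp_mul v _ continuous_sinTC hsinb
  set S : HT := hSmem.toLp _ with hS_def
  have hScoe : (S : AddCircle (2 * Real.pi) → ℂ) =ᵐ[μ₀] fun y => (sinT y : ℂ) * v y :=
    hSmem.coeFn_toLp
  set F : HT := (μ : ℂ) • u - S with hF_def
  have hFcoe : (F : AddCircle (2 * Real.pi) → ℂ)
      =ᵐ[μ₀] fun y => (μ : ℂ) * u y - (sinT y : ℂ) * (u y + invA l u y) := by
    filter_upwards [Lp.coeFn_sub ((μ:ℂ) • u) S, Lp.coeFn_smul (μ:ℂ) u, hScoe,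
      Lp.coeFn_add u (invA l u)] with y h1 h2 h3 h4
    rw [hF_def]
    rw [h1]
    simp only [Pi.sub_apply]
    rw [h2, h3]
    simp only [Pi.smul_apply, smul_eq_mul]
    have h5 : (v : AddCircle (2 * Real.pi) → ℂ) y = u y + invA l u y := by
      rw [hv_def]
      exact h4
    rw [h5]
  -- norm identifications
  have hnrm_v : nrmT (fun y => u y + invA l u y) = ‖v‖ := by
    rw [Lp.norm_def]
    unfold nrmT
    congr 1
    apply eLpNorm_congr_ae
    filter_upwards [Lp.coeFn_add u (invA l u)] with y h
    rw [hv_def, h]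
    simp
  have hnrm_f : nrmT (fun y => (μ : ℂ) * u y - (sinT y : ℂ) * (u y + invA l u y)) = ‖F‖ := by
    rw [Lp.norm_def]
    unfold nrmT
    congr 1
    exact eLpNorm_congr_ae hFcoe.symm
  have hCmem : MemLp (fun y => (cosT y : ℂ) * v y) 2 μ₀ :=
    memLp_mul v _ continuous_cosTC hcosb
  set Cc : HT := hCmem.toLp _ with hC_def
  have hnrm_c : nrmT (fun y => (cosT y : ℂ) * (u y + invA l u y)) = ‖Cc‖ := by
    rw [Lp.norm_def]
    unfold nrmT
    congr 1
    apply eLpNorm_congr_ae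
    filter_upwards [hCmem.coeFn_toLp, Lp.coeFn_add u (invA l u)] with y h1 h2
    rw [h1, hv_def, h2]
    simp
  have hCc2 : ‖Cc‖ ^ 2 = ∫ t, (cosT t) ^ 2 * ‖v t‖ ^ 2 ∂μ₀ := by
    rw [norm_sq_integral]
    apply integral_congr_ae
    filter_upwards [hCmem.coeFn_toLp] with t ht
    rw [ht, norm_mul, Complex.norm_real, Real.norm_eq_abs, mul_pow, _root_.sq_abs]
  -- the quantity Ts
  set Ts : ℝ := ∫ t, sinT t * ‖v t‖ ^ 2 ∂μ₀ with hTs_def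
  have hTs_int : Integrable (fun t => sinT t * ‖v t‖ ^ 2) μ₀ :=
    (integrable_normsq v).bdd_mul continuous_sinT.aestronglyMeasurable
      (Filter.Eventually.of_forall fun y => by rw [Real.norm_eq_abs]; exact abs_sinT_le y)
  have hSv : (inner ℂ S v : ℂ) = ((Ts : ℝ) : ℂ) := by
    have hstep : (inner ℂ S v : ℂ) = ∫ t, ((sinT t * ‖v t‖ ^ 2 : ℝ) : ℂ) ∂μ₀ := by
      rw [MeasureTheory.L2.inner_def]
      apply integral_congr_ae
      filter_upwards [hScoe] with t ht
      rw [RCLike.inner_apply, ht]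
      rw [map_mul, Complex.conj_ofReal, mul_comm, mul_assoc, conj_mul_self, Complex.ofReal_mul]
    rw [hstep, hTs_def]
    exact integral_ofReal
  have hTs_abs : |Ts| ≤ ‖v‖ ^ 2 := by
    rw [norm_sq_integral]
    have h1 : |Ts| ≤ ∫ t, |sinT t * ‖v t‖ ^ 2| ∂μ₀ := by
      rw [hTs_def]
      exact (Real.norm_eq_abs _ ▸ norm_integral_le_integral_norm _ : _)
    refine le_trans h1 (integral_mono hTs_int.abs (integrable_normsq v) ?_)
    intro t
    show |sinT t * ‖v t‖ ^ 2| ≤ ‖v t‖ ^ 2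
    rw [abs_mul, _root_.abs_of_nonneg (sq_nonneg ‖v t‖)]
    exact ptwise_abs (abs_sinT_le t) (sq_nonneg ‖v t‖)
  -- the key inner product computation
  have hFv : (inner ℂ F v : ℂ).re = μ * (‖v‖ ^ 2 + P) - Ts := by
    rw [hF_def, inner_sub_left, inner_smul_left, hinner_uv, hSv, hW]
    rw [Complex.conj_ofReal]
    rw [← Complex.ofReal_mul, ← Complex.ofReal_sub, Complex.ofReal_re]
  have hCSb : |(inner ℂ F v : ℂ).re| ≤ ‖F‖ * ‖v‖ := by
    refine le_trans (Complex.abs_re_le_norm _) ?_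
    exact norm_inner_le_norm F v
  set E : ℝ := σ * (inner ℂ F v : ℂ).re with hE_def
  have hE_eq : E = |μ| * (‖v‖ ^ 2 + P) - σ * Ts := by
    rw [hE_def, hFv]
    linear_combination (‖v‖ ^ 2 + P) * hσμ
  have hE_le : E ≤ ‖F‖ * ‖v‖ := by
    have h1 : E ≤ |E| := le_abs_self E
    have h2 : |E| = |σ| * |(inner ℂ F v : ℂ).re| := abs_mul σ _
    rw [hσabs, one_mul] at h2
    linarith [hCSb, h1, h2.le]
  have hσTs : σ * Ts ≤ ‖v‖ ^ 2 := by
    have h1 : σ * Ts ≤ |σ * Ts| := le_abs_self _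
    have h2 : |σ * Ts| = |σ| * |Ts| := abs_mul σ Ts
    rw [hσabs, one_mul] at h2
    linarith [hTs_abs]
  have hE_ge : (|μ| - 1) * ‖v‖ ^ 2 + |μ| * P ≤ E := by
    rw [hE_eq]
    nlinarith [hP_nonneg, hσTs]
  -- core bounds
  have hvnn : (0:ℝ) ≤ ‖v‖ := norm_nonneg _
  have hFnn : (0:ℝ) ≤ ‖F‖ := norm_nonneg _
  obtain ⟨key1, hE_F2, key3⟩ := arith1 hμ hvnn hFnn hP_nonneg hE_ge hE_le
  have key2 : (|μ| - 1) * ‖Cc‖ ^ 2 ≤ 2 * ‖F‖ ^ 2 := by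
    have hintle : ‖Cc‖ ^ 2 ≤ 2 * ‖v‖ ^ 2 - 2 * (σ * Ts) := by
      rw [hCc2]
      have hlhs_int : Integrable (fun t => (cosT t) ^ 2 * ‖v t‖ ^ 2) μ₀ := by
        refine (integrable_normsq v).bdd_mul (c := 1) ?_ (Filter.Eventually.of_forall fun y => ?_)
        · exact (continuous_cosT.pow 2).aestronglyMeasurable
        · rw [Real.norm_eq_abs, _root_.abs_of_nonneg (sq_nonneg _)]
          exact cosT_sq_le_one y
      have hrhs_int : Integrable (fun t => 2 * ‖v t‖ ^ 2 - 2 * σ * (sinT t * ‖v t‖ ^ 2)) μ₀ :=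
        ((integrable_normsq v).const_mul 2).sub (hTs_int.const_mul (2 * σ))
      have hmono : ∫ t, (cosT t) ^ 2 * ‖v t‖ ^ 2 ∂μ₀
          ≤ ∫ t, (2 * ‖v t‖ ^ 2 - 2 * σ * (sinT t * ‖v t‖ ^ 2)) ∂μ₀ := by
        refine integral_mono hlhs_int hrhs_int ?_
        intro t
        show (cosT t) ^ 2 * ‖v t‖ ^ 2 ≤ 2 * ‖v t‖ ^ 2 - 2 * σ * (sinT t * ‖v t‖ ^ 2)
        exact ptwise_cos hσsq (sin_cos_sq t) (sq_nonneg ‖v t‖)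
      have hrhs : ∫ t, (2 * ‖v t‖ ^ 2 - 2 * σ * (sinT t * ‖v t‖ ^ 2)) ∂μ₀
          = 2 * ‖v‖ ^ 2 - 2 * (σ * Ts) := by
        rw [integral_sub ((integrable_normsq v).const_mul 2) (hTs_int.const_mul (2 * σ)),
          integral_const_mul, integral_const_mul, ← hTs_def, norm_sq_integral]
        ring
      linarith [hmono, hrhs.symm.le, hrhs.le]
    exact arith2 hμ hP_nonneg hE_eq hintle hE_F2
  -- decomposition of sqHm1
  have hsqm : sqHm1 l u = ∑' n : ℤ, s n * ‖a n‖ ^ 2 := by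
    unfold sqHm1
    rfl
  have hsplit : sqHm1 l u = P + ∑' n : ℤ, s n ^ 2 * ‖a n‖ ^ 2 := by
    rw [hsqm, hP_def, ← Summable.tsum_add hsumP hsumR]
    apply tsum_congr
    intro n
    have h := hrs n
    linear_combination (-(s n * ‖a n‖ ^ 2)) * h
  -- final assembly
  rw [hnrm_v, hnrm_c, hnrm_f]
  by_cases hbad : l = 1 ∨ l = -1
  · -- bad case : |l| = 1
    have hl2 : (l:ℝ) ^ 2 = 1 := by rcases hbad with h | h <;> rw [h] <;> norm_num
    have hs1 : s 1 = 1/2 := by simp only [hs_def]; rw [hl2]; norm_num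
    have hsm1 : s (-1) = 1/2 := by simp only [hs_def]; rw [hl2]; norm_num
    have hr1 : r 1 = 1/2 := by simp only [hr_def]; rw [hs1]; norm_num
    have hrm1 : r (-1) = 1/2 := by simp only [hr_def]; rw [hsm1]; norm_num
    have hs0 : s 0 = 1 := by simp only [hs_def]; rw [hl2]; norm_num
    -- remainder sum bound
    have hRsplit : ∑' n : ℤ, s n ^ 2 * ‖a n‖ ^ 2
        = ‖a 0‖ ^ 2 + ∑' n : ℤ, (if n = 0 then 0 else s n ^ 2 * ‖a n‖ ^ 2) := by
      rw [Summable.tsum_eq_add_tsum_ite hsumR 0, hs0]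
      norm_num
    have hRle : ∑' n : ℤ, (if n = 0 then 0 else s n ^ 2 * ‖a n‖ ^ 2) ≤ P := by
      rw [hP_def]
      refine Summable.tsum_le_tsum ?_ (hsumR.of_nonneg_of_le (fun n => ?_) (fun n => ?_)) hsumP
      · intro n
        by_cases hn : n = 0
        · simp only [hn, if_true]
          have := hs_pos (0:ℤ)
          have := hr_nonneg (0:ℤ)
          positivity
        · simp only [hn, if_false]
          have hn2 : (1:ℝ) ≤ ((n:ℝ)) ^ 2 := int_one_le_sq hn
          have hqn : (2:ℝ) ≤ (n:ℝ)^2 + (l:ℝ)^2 := by rw [hl2]; linarith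
          have hsn : s n ≤ 1/2 := by
            have h1 : ((n:ℝ)^2 + (l:ℝ)^2)⁻¹ ≤ (2:ℝ)⁻¹ := by
              apply inv_anti₀ (by norm_num) hqn
            simp only [hs_def]
            linarith [h1]
          have hrn : 1/2 ≤ r n := by simp only [hr_def]; linarith
          exact sr_term (hs_pos n) hsn hrn (sq_nonneg ‖a n‖)
      · by_cases hn : n = 0
        · simp [hn]
        · simp only [hn, if_false]
          positivity
      · by_cases hn : n = 0
        · simp only [hn, if_true]
          positivity
        · simp [hn]
    -- bad mode bound
    have hF0le : ‖coefT F 0‖ ^ 2 ≤ ‖F‖ ^ 2 := by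
      rw [norm_sq_tsum F]
      exact Summable.le_tsum (summable_coef_sq F) 0 (fun _ _ => sq_nonneg _)
    have hcoefF0 : coefT F 0 = (μ:ℂ) * a 0 - coefT S 0 := by
      rw [hF_def, coefT_sub, coefT_smul, ha_def]
    have hS0 : coefT S 0 = (2 * Complex.I)⁻¹ * coefT v (-1) - (2 * Complex.I)⁻¹ * coefT v 1 := by
      have h1 : coefT S 0 = ∫ t, (sinT t : ℂ) * v t ∂μ₀ := by
        rw [coefT, fourierCoeff_congr_ae' hScoe 0]
        unfold fourierCoeff
        apply integral_congr_ae
        filter_upwards with t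
        rw [neg_zero, fourier_zero, one_smul]
      rw [h1]
      have h2 : (fun t => (sinT t : ℂ) * v t)
          = fun t => (2 * Complex.I)⁻¹ * (fourier 1 t * v t)
              - (2 * Complex.I)⁻¹ * (fourier (-1) t * v t) := by
        funext t
        rw [sinT_eqC t]
        ring
      rw [h2, integral_sub ((integrable_fourier_mul v 1).const_mul _)
        ((integrable_fourier_mul v (-1)).const_mul _), integral_const_mul, integral_const_mul]
      rw [coefT_eq_intg v (-1), coefT_eq_intg v 1]
      norm_num
    have hnormS0 : ‖coefT S 0‖ ≤ (‖coefT v 1‖ + ‖coefT v (-1)‖) / 2 := by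
      rw [hS0]
      have h2I : ‖(2 * Complex.I)⁻¹‖ = 1/2 := by
        rw [norm_inv, norm_mul, Complex.norm_I]
        norm_num
      calc ‖(2 * Complex.I)⁻¹ * coefT v (-1) - (2 * Complex.I)⁻¹ * coefT v 1‖
          ≤ ‖(2 * Complex.I)⁻¹ * coefT v (-1)‖ + ‖(2 * Complex.I)⁻¹ * coefT v 1‖ :=
            norm_sub_le _ _
        _ = (1/2) * ‖coefT v (-1)‖ + (1/2) * ‖coefT v 1‖ := by rw [norm_mul, norm_mul, h2I]
        _ = (‖coefT v 1‖ + ‖coefT v (-1)‖) / 2 := by ring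
    have hv1n : ‖coefT v 1‖ ^ 2 = (1/4) * ‖a 1‖ ^ 2 := by
      rw [hvcn 1, hr1]; norm_num
    have hvm1n : ‖coefT v (-1)‖ ^ 2 = (1/4) * ‖a (-1)‖ ^ 2 := by
      rw [hvcn (-1), hrm1]; norm_num
    have hPge : (1/4) * ‖a 1‖ ^ 2 + (1/4) * ‖a (-1)‖ ^ 2 ≤ P := by
      rw [hP_def]
      have h := Summable.sum_le_tsum ({1, -1} : Finset ℤ)
        (fun n _ => by
          have := hs_pos n
          have := hr_nonneg n
          positivity)
        hsumP
      rw [Finset.sum_pair (by norm_num : (1:ℤ) ≠ -1)] at h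
      rw [hs1, hr1, hsm1, hrm1] at h
      linarith [h]
    have htri : |μ| * ‖a 0‖ ≤ ‖coefT F 0‖ + (‖coefT v 1‖ + ‖coefT v (-1)‖) / 2 := by
      have h1 : ‖(μ:ℂ) * a 0‖ = |μ| * ‖a 0‖ := by
        rw [norm_mul, Complex.norm_real, Real.norm_eq_abs]
      have h2 : (μ:ℂ) * a 0 = coefT F 0 + coefT S 0 := by rw [hcoefF0]; ring
      calc |μ| * ‖a 0‖ = ‖(μ:ℂ) * a 0‖ := h1.symm
        _ = ‖coefT F 0 + coefT S 0‖ := by rw [h2]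
        _ ≤ ‖coefT F 0‖ + ‖coefT S 0‖ := norm_add_le _ _
        _ ≤ ‖coefT F 0‖ + (‖coefT v 1‖ + ‖coefT v (-1)‖) / 2 := by linarith [hnormS0]
    have hsq : |μ| ^ 2 * ‖a 0‖ ^ 2 ≤ 2 * ‖F‖ ^ 2 + P := by
      have hD : ((‖coefT v 1‖ + ‖coefT v (-1)‖) / 2) ^ 2 ≤ P / 2 :=
        arith5 hv1n hvm1n hPge
      exact arith4 hμ (norm_nonneg (a 0)) (norm_nonneg (coefT F 0))
        (by positivity) htri hF0le hD
    have hbad0 : |μ| * (|μ| - 1) * ‖a 0‖ ^ 2 ≤ 3 * ‖F‖ ^ 2 :=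
      arith3 hμ hFnn (sq_nonneg _) hsq key3
    -- conclude bad case
    have hfin : |μ| * (|μ| - 1) * sqHm1 l u ≤ 5 * ‖F‖ ^ 2 := by
      have hsum_le : sqHm1 l u ≤ 2 * P + ‖a 0‖ ^ 2 := by
        rw [hsplit, hRsplit]
        linarith [hRle]
      exact arith6 hμ hsum_le key3 hbad0
    linarith [key1, key2, hfin, sq_nonneg ‖F‖]
  · -- good case : |l| ≥ 2
    have hl2 : (4:ℝ) ≤ (l:ℝ) ^ 2 := by
      push_neg at hbad
      exact int_four_le_sq hl hbad.1 hbad.2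
    have hRle : ∑' n : ℤ, s n ^ 2 * ‖a n‖ ^ 2 ≤ P := by
      rw [hP_def]
      refine Summable.tsum_le_tsum (fun n => ?_) hsumR hsumP
      have hqn : (2:ℝ) ≤ (n:ℝ)^2 + (l:ℝ)^2 := by nlinarith [sq_nonneg ((n:ℝ))]
      have hsn : s n ≤ 1/2 := by
        have h1 : ((n:ℝ)^2 + (l:ℝ)^2)⁻¹ ≤ (2:ℝ)⁻¹ := by
          apply inv_anti₀ (by norm_num) hqn
        simp only [hs_def]
        linarith [h1]
      have hrn : 1/2 ≤ r n := by simp only [hr_def]; linarith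
      exact sr_term (hs_pos n) hsn hrn (sq_nonneg ‖a n‖)
    have hfin : |μ| * (|μ| - 1) * sqHm1 l u ≤ 2 * ‖F‖ ^ 2 := by
      have hsum_le : sqHm1 l u ≤ 2 * P := by
        rw [hsplit]
        linarith [hRle]
      exact arith7 hμ hsum_le key3
    linarith [key1, key2, hfin, sq_nonneg ‖F‖]
end
end
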